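/- Let α, β be real with −β < α < 0, let ρ(s) = (s+1)^{(α−β)/2−1}(s−1)^{(α+β)/2−1} for s ∈ (1,∞), and for l ∈ ℕ define Ψ_l(s) = (1/ρ(s)) · (d/ds)^l [(s²−1)^l ρ(s)]. Then for every natural number l with l < (1−α)/2 there exists a real polynomial p of degree exactly l such that Ψ_l(s) = p(s) for all s ∈ (1,∞). -/

import Mathlib

open Finset

noncomputable def rodC (A B : ℝ) : ℕ → ℕ → ℝ
  | 0, 0 => 1
  | 0, _ + 1 => 0
  | n + 1, 0 => rodC A B n 0 * (B - n)
  | n + 1, k + 1 => rodC A B n k * (A - k) + rodC A B n (k + 1) * (B - n + (k + 1))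

lemma rodC_eq_zero (A B : ℝ) : ∀ n k : ℕ, n < k → rodC A B n k = 0 := by
  intro n
  induction n with
  | zero => intro k hk; match k, hk with
    | k + 1, _ => simp [rodC]
  | succ n ih =>
    intro k hk
    match k, hk with
    | k + 1, hk =>
      have h1 : n < k := by omega
      have h2 : n < k + 1 := by omega
      simp [rodC, ih k h1, ih (k+1) h2]

lemma rodC_sum (A B : ℝ) (n : ℕ) :
    ∑ k ∈ range (n + 1), rodC A B n k = ∏ i ∈ range n, (A + B - i) := by
  induction n with
  | zero => simp [rodC]
  | succ n ih =>
    rw [Finset.sum_range_succ' (fun k => rodC A B (n+1) k) (n+1)]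
    have h1 : ∀ j, rodC A B (n+1) (j+1)
        = rodC A B n j * (A - j) + rodC A B n (j+1) * (B - n + (j+1)) := fun j => rfl
    have h0 : rodC A B (n+1) 0 = rodC A B n 0 * (B - n) := rfl
    simp only [h1, h0, Finset.sum_add_distrib]
    have h2 : ∑ j ∈ range (n+1), rodC A B n (j+1) * (B - n + (j+1)) + rodC A B n 0 * (B - n)
        = ∑ k ∈ range (n+2), rodC A B n k * (B - n + k) := by
      rw [Finset.sum_range_succ' (fun k => rodC A B n k * (B - (n:ℝ) + k)) (n+1)]
      push_cast; norm_num
    have h3 : ∑ k ∈ range (n+2), rodC A B n k * (B - n + k)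
        = ∑ k ∈ range (n+1), rodC A B n k * (B - n + k) := by
      rw [Finset.sum_range_succ, rodC_eq_zero A B n (n+1) (by omega)]; simp
    rw [add_assoc, h2, h3, ← Finset.sum_add_distrib, Finset.prod_range_succ, ← ih,
      Finset.sum_mul]
    apply Finset.sum_congr rfl
    intro k _
    ring

noncomputable def rodW (s A B : ℝ) (m j : ℕ) : ℝ :=
  (s + 1) ^ (A - j) * (s - 1) ^ (B - m + j)

lemma rod_deriv (A B : ℝ) (n : ℕ) :
    ∀ s ∈ Set.Ioi (1 : ℝ),
      iteratedDeriv n (fun t : ℝ => (t + 1) ^ A * (t - 1) ^ B) s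
        = ∑ k ∈ range (n + 1), rodC A B n k * rodW s A B n k := by
  induction n with
  | zero =>
    intro s _
    simp [rodC, rodW, iteratedDeriv_zero]
  | succ n ih =>
    intro s hs
    have hs' : (1:ℝ) < s := hs
    have hs1 : (0:ℝ) < s + 1 := by linarith
    have hs2 : (0:ℝ) < s - 1 := by linarith
    rw [iteratedDeriv_succ]
    have hev : iteratedDeriv n (fun t : ℝ => (t + 1) ^ A * (t - 1) ^ B)
        =ᶠ[nhds s] fun u => ∑ k ∈ range (n + 1), rodC A B n k * rodW u A B n k :=
      Filter.eventuallyEq_of_mem (isOpen_Ioi.mem_nhds hs) (fun u hu => ih u hu)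
    rw [hev.deriv_eq]
    have hd : HasDerivAt (fun u : ℝ => ∑ k ∈ range (n + 1), rodC A B n k * rodW u A B n k)
        (∑ k ∈ range (n + 1), rodC A B n k *
          ((A - k) * (s + 1) ^ (A - k - 1) * (s - 1) ^ (B - n + k)
            + (s + 1) ^ (A - k) * ((B - n + k) * (s - 1) ^ (B - n + k - 1)))) s := by
      apply HasDerivAt.fun_sum
      intro k _
      simp only [rodW]
      have h1 : HasDerivAt (fun u : ℝ => (u + 1) ^ (A - (k:ℝ)))
          ((A - k) * (s + 1) ^ (A - k - 1)) s := by
        have := (((hasDerivAt_id s).add_const 1).rpow_const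
          (p := A - (k:ℝ)) (Or.inl (ne_of_gt hs1)))
        simpa using this
      have h2 : HasDerivAt (fun u : ℝ => (u - 1) ^ (B - (n:ℝ) + k))
          ((B - n + k) * (s - 1) ^ (B - n + k - 1)) s := by
        have := (((hasDerivAt_id s).sub_const 1).rpow_const
          (p := B - (n:ℝ) + k) (Or.inl (ne_of_gt hs2)))
        simpa using this
      have h3 := (h1.fun_mul h2).const_mul (rodC A B n k)
      convert h3 using 1
    rw [hd.deriv]
    have hWe : ∀ k : ℕ, rodC A B n k *
          ((A - k) * (s + 1) ^ (A - k - 1) * (s - 1) ^ (B - n + k)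
            + (s + 1) ^ (A - k) * ((B - n + k) * (s - 1) ^ (B - n + k - 1)))
        = rodC A B n k * (A - k) * rodW s A B (n+1) (k + 1)
          + rodC A B n k * (B - n + k) * rodW s A B (n+1) k := by
      intro k
      have e1 : A - (k:ℝ) - 1 = A - ((k+1 : ℕ) : ℝ) := by push_cast; ring
      have e2 : B - (n:ℝ) + k = B - ((n+1:ℕ) : ℝ) + ((k+1:ℕ) : ℝ) := by push_cast; ring
      have e3 : B - (n:ℝ) + k - 1 = B - ((n+1:ℕ) : ℝ) + k := by push_cast; ring
      rw [show (A - (k:ℝ)) * (s + 1) ^ (A - k - 1) * (s - 1) ^ (B - n + k)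
          = (A - (k:ℝ)) * ((s + 1) ^ (A - ((k+1:ℕ):ℝ)) * (s - 1) ^ (B - ((n+1:ℕ):ℝ) + ((k+1:ℕ):ℝ)))
          from by rw [← e1, ← e2]; ring]
      rw [show (s + 1) ^ (A - (k:ℝ)) * ((B - (n:ℝ) + k) * (s - 1) ^ (B - n + k - 1))
          = (B - (n:ℝ) + k) * ((s + 1) ^ (A - (k:ℝ)) * (s - 1) ^ (B - ((n+1:ℕ):ℝ) + (k:ℝ)))
          from by rw [← e3]; ring]
      simp only [rodW]
      push_cast
      ring
    simp only [hWe, Finset.sum_add_distrib]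
    -- key reindexing identity
    rw [Finset.sum_range_succ' (fun k => rodC A B (n+1) k * rodW s A B (n+1) k) (n+1)]
    have h1 : ∀ j : ℕ, rodC A B (n+1) (j+1) * rodW s A B (n+1) (j+1)
        = rodC A B n j * (A - j) * rodW s A B (n+1) (j+1)
          + rodC A B n (j+1) * (B - n + ((j:ℝ)+1)) * rodW s A B (n+1) (j+1) := by
      intro j
      have : rodC A B (n+1) (j+1)
          = rodC A B n j * (A - j) + rodC A B n (j+1) * (B - n + ((j:ℝ)+1)) := rfl
      rw [this]; ring
    have h0 : rodC A B (n+1) 0 * rodW s A B (n+1) 0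
        = rodC A B n 0 * (B - n) * rodW s A B (n+1) 0 := by
      have : rodC A B (n+1) 0 = rodC A B n 0 * (B - n) := rfl
      rw [this]
    rw [h0]
    simp only [h1, Finset.sum_add_distrib]
    have h2 : ∑ j ∈ range (n+1), rodC A B n (j+1) * (B - n + ((j:ℝ)+1)) * rodW s A B (n+1) (j+1)
          + rodC A B n 0 * (B - n) * rodW s A B (n+1) 0
        = ∑ k ∈ range (n+2), rodC A B n k * (B - n + k) * rodW s A B (n+1) k := by
      rw [Finset.sum_range_succ' (fun k => rodC A B n k * (B - (n:ℝ) + k) * rodW s A B (n+1) k) (n+1)]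
      push_cast; norm_num
    have h3 : ∑ k ∈ range (n+2), rodC A B n k * (B - n + k) * rodW s A B (n+1) k
        = ∑ k ∈ range (n+1), rodC A B n k * (B - n + k) * rodW s A B (n+1) k := by
      rw [Finset.sum_range_succ, rodC_eq_zero A B n (n+1) (by omega)]
      simp
    rw [add_assoc, h2, h3]

/-- For `-β < α < 0`, the weight
`ρ(s) = (s+1)^{(α-β)/2-1}(s-1)^{(α+β)/2-1}` on `(1,∞)` (case `σ(s) = s²-1`)
and `Ψ_l(s) = (1/ρ(s)) (d/ds)^l [(s²-1)^l ρ(s)]`, for every `l` with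
`l < (1-α)/2` there is a real polynomial `p` of degree exactly `l` with
`Ψ_l = p` on `(1,∞)`. -/
theorem rodrigues_is_polynomial_of_degree_l
    (α β : ℝ) (hαβ : -β < α) (hα : α < 0)
    (ρ : ℝ → ℝ)
    (hρ : ∀ s : ℝ, s ∈ Set.Ioi (1 : ℝ) →
      ρ s = (s + 1) ^ ((α - β) / 2 - 1) * (s - 1) ^ ((α + β) / 2 - 1))
    (l : ℕ) (hl : (l : ℝ) < (1 - α) / 2)
    (Ψ : ℝ → ℝ)
    (hΨ : ∀ s : ℝ, s ∈ Set.Ioi (1 : ℝ) →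
      Ψ s = (1 / ρ s) * iteratedDeriv l (fun t => (t ^ 2 - 1) ^ l * ρ t) s) :
    ∃ p : Polynomial ℝ, p.degree = l ∧ ∀ s ∈ Set.Ioi (1 : ℝ), Ψ s = p.eval s := by
  set a : ℝ := (α - β) / 2 - 1 with ha
  set b : ℝ := (α + β) / 2 - 1 with hb
  set A : ℝ := a + l with hA
  set B : ℝ := b + l with hB
  -- the function agrees with (t+1)^A (t-1)^B on (1,∞)
  have hfG : ∀ t ∈ Set.Ioi (1:ℝ), (t ^ 2 - 1) ^ l * ρ t = (t + 1) ^ A * (t - 1) ^ B := by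
    intro t ht
    have ht' : (1:ℝ) < t := ht
    have ht1 : (0:ℝ) < t + 1 := by linarith
    have ht2 : (0:ℝ) < t - 1 := by linarith
    rw [hρ t ht, show t ^ 2 - 1 = (t + 1) * (t - 1) from by ring, mul_pow,
      hA, hB, Real.rpow_add ht1, Real.rpow_add ht2, Real.rpow_natCast, Real.rpow_natCast]
    ring
  -- the polynomial
  set p : Polynomial ℝ := ∑ k ∈ range (l + 1), Polynomial.C (rodC A B l k) *
      ((Polynomial.X + Polynomial.C 1) ^ (l - k) * (Polynomial.X - Polynomial.C 1) ^ k) with hp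
  have hq : ∀ k, k ≤ l → ((Polynomial.X + Polynomial.C (1:ℝ)) ^ (l - k) *
      (Polynomial.X - Polynomial.C (1:ℝ)) ^ k).Monic ∧
      ((Polynomial.X + Polynomial.C (1:ℝ)) ^ (l - k) *
      (Polynomial.X - Polynomial.C (1:ℝ)) ^ k).natDegree = l := by
    intro k hk
    have hm : ((Polynomial.X + Polynomial.C (1:ℝ)) ^ (l - k) *
        (Polynomial.X - Polynomial.C (1:ℝ)) ^ k).Monic :=
      ((Polynomial.monic_X_add_C (1:ℝ)).pow (l - k)).mul
        ((Polynomial.monic_X_sub_C (1:ℝ)).pow k)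
    refine ⟨hm, ?_⟩
    rw [Polynomial.Monic.natDegree_mul ((Polynomial.monic_X_add_C (1:ℝ)).pow (l - k))
      ((Polynomial.monic_X_sub_C (1:ℝ)).pow k), Polynomial.natDegree_pow,
      Polynomial.natDegree_pow, Polynomial.natDegree_X_add_C, Polynomial.natDegree_X_sub_C]
    omega
  -- degree ≤ l
  have hdegle : p.degree ≤ (l : WithBot ℕ) := by
    rw [hp]
    refine le_trans (Polynomial.degree_sum_le _ _) ?_
    rw [Finset.sup_le_iff]
    intro k hk
    have hk' : k ≤ l := by have := mem_range.mp hk; omega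
    calc (Polynomial.C (rodC A B l k) *
          ((Polynomial.X + Polynomial.C (1:ℝ)) ^ (l - k) *
            (Polynomial.X - Polynomial.C 1) ^ k)).degree
        ≤ (Polynomial.C (rodC A B l k)).degree +
          ((Polynomial.X + Polynomial.C (1:ℝ)) ^ (l - k) *
            (Polynomial.X - Polynomial.C 1) ^ k).degree := Polynomial.degree_mul_le _ _
      _ ≤ 0 + (l : WithBot ℕ) := by
          refine add_le_add Polynomial.degree_C_le ?_
          refine le_trans (Polynomial.degree_le_natDegree) ?_
          rw [(hq k hk').2]
      _ = (l : WithBot ℕ) := zero_add _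
  -- leading coefficient
  have hcoeff : p.coeff l = ∏ i ∈ range l, (A + B - i) := by
    rw [hp, Polynomial.finset_sum_coeff]
    rw [← rodC_sum A B l]
    apply Finset.sum_congr rfl
    intro k hk
    have hk' : k ≤ l := by have := mem_range.mp hk; omega
    rw [Polynomial.coeff_C_mul]
    have h1 : ((Polynomial.X + Polynomial.C (1:ℝ)) ^ (l - k) *
        (Polynomial.X - Polynomial.C (1:ℝ)) ^ k).coeff l = 1 := by
      have := (hq k hk').1.coeff_natDegree
      rw [(hq k hk').2] at this
      exact this
    rw [h1, mul_one]
  have hcne : p.coeff l ≠ 0 := by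
    rw [hcoeff]
    refine Finset.prod_ne_zero_iff.mpr ?_
    intro i hi
    have hi0 : (0:ℝ) ≤ i := Nat.cast_nonneg i
    have : A + B - i < 0 := by
      rw [hA, hB, ha, hb]
      linarith
    exact ne_of_lt this
  have hdeg : p.degree = (l : WithBot ℕ) :=
    Polynomial.degree_eq_of_le_of_coeff_ne_zero hdegle hcne
  refine ⟨p, hdeg, ?_⟩
  intro s hs
  have hs' : (1:ℝ) < s := hs
  have hs1 : (0:ℝ) < s + 1 := by linarith
  have hs2 : (0:ℝ) < s - 1 := by linarith
  -- replace the iterated derivative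
  have hiter : iteratedDeriv l (fun t => (t ^ 2 - 1) ^ l * ρ t) s
      = ∑ k ∈ range (l + 1), rodC A B l k * rodW s A B l k := by
    have hev : (fun t : ℝ => (t ^ 2 - 1) ^ l * ρ t)
        =ᶠ[nhds s] fun t : ℝ => (t + 1) ^ A * (t - 1) ^ B :=
      Filter.eventuallyEq_of_mem (isOpen_Ioi.mem_nhds hs) (fun u hu => hfG u hu)
    rw [hev.iteratedDeriv_eq l, rod_deriv A B l s hs]
  have hps : p.eval s = ∑ k ∈ range (l + 1), rodC A B l k * ((s + 1) ^ (l - k) * (s - 1) ^ k) := by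
    rw [hp, Polynomial.eval_finset_sum]
    simp
  rw [hΨ s hs, hiter, hρ s hs, hps, Finset.mul_sum]
  apply Finset.sum_congr rfl
  intro k hk
  have hk' : k ≤ l := by have := mem_range.mp hk; omega
  have n1 : (s + 1) ^ a ≠ 0 := (Real.rpow_pos_of_pos hs1 a).ne'
  have n2 : (s - 1) ^ b ≠ 0 := (Real.rpow_pos_of_pos hs2 b).ne'
  rw [rodW]
  have eA : A - (k:ℝ) = a + ((l - k : ℕ) : ℝ) := by
    rw [Nat.cast_sub hk', hA]; ring
  have eB : B - (l:ℝ) + (k:ℝ) = b + ((k : ℕ) : ℝ) := by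
    rw [hB]; ring
  rw [eA, eB, Real.rpow_add hs1, Real.rpow_add hs2, Real.rpow_natCast, Real.rpow_natCast]
  field_simp
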